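/- arXiv:1709.06281 — 2 statements merged into one kernel-verified Lean document; each statement's English description precedes it below -/
import Mathlib

section
/- Let K > S ≥ 0 be integers and M, N > 0 reals with M(K-S)/N > 1 and M < N. Then the polynomial g(r) = Σ_{i=0}^{K-S-1} C(K-S, i)(-M/N)^{K-S-i} r^{K-S-1-i} + 1 satisfies g(0) < 0 and g(1) > 0, and thus has a real root in (0, 1). -/
theorem stmt9 (K S : ℕ) (hS : S < K) (M N : ℝ) (hM : 0 < M) (hN : 0 < N)
    (hMK : 1 < M * (K - S : ℕ) / N) (hMN : M < N)
    (g : ℝ → ℝ)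
    (hg : ∀ r, g r = ∑ i ∈ Finset.range (K - S),
        ((K - S).choose i : ℝ) * (-(M / N)) ^ (K - S - i) * r ^ (K - S - 1 - i) + 1) :
    g 0 < 0 ∧ 0 < g 1 ∧ ∃ r ∈ Set.Ioo (0 : ℝ) 1, g r = 0 := by
  set n := K - S with hn
  have hn0 : 0 < n := Nat.sub_pos_of_lt hS
  -- g 0
  have hg0 : g 0 = 1 - n * (M / N) := by
    rw [hg 0]
    rw [Finset.sum_eq_single (n - 1)]
    · have h1 : n - (n - 1) = 1 := by omega
      have h2 : n - 1 - (n - 1) = 0 := by omega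
      have hch : n.choose (n - 1) = n := by
        rw [Nat.choose_symm hn0, Nat.choose_one_right]
      rw [h1, h2, hch]
      ring
    · intro i hi hne
      have hi' : i < n := Finset.mem_range.mp hi
      have : n - 1 - i ≠ 0 := by omega
      rw [zero_pow this, mul_zero]
    · intro h
      exact absurd (Finset.mem_range.mpr (by omega)) h
  have hMN' : 1 < (n : ℝ) * (M / N) := by
    have : M * n / N = n * (M / N) := by ring
    rw [← this]; exact hMK
  have hA : g 0 < 0 := by rw [hg0]; linarith
  -- g 1
  have hg1 : g 1 = (1 - M / N) ^ n := by
    rw [hg 1]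
    have hp : (1 + -(M / N)) ^ n =
        ∑ i ∈ Finset.range (n + 1), 1 ^ i * (-(M / N)) ^ (n - i) * (n.choose i : ℝ) :=
      Commute.add_pow (Commute.all _ _) n
    rw [Finset.sum_range_succ] at hp
    simp only [one_pow, one_mul, Nat.sub_self, pow_zero, Nat.choose_self, Nat.cast_one,
      mul_one] at hp
    have hsum : ∑ i ∈ Finset.range n, ((n.choose i : ℝ)) * (-(M / N)) ^ (n - i) * 1 ^ (n - 1 - i)
        = ∑ i ∈ Finset.range n, (-(M / N)) ^ (n - i) * (n.choose i : ℝ) := by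
      apply Finset.sum_congr rfl
      intro i _
      ring
    rw [hsum]
    have : (1 - M / N) ^ n = (1 + -(M / N)) ^ n := by ring_nf
    rw [this, hp]
  have hB : 0 < g 1 := by
    rw [hg1]
    apply pow_pos
    have : M / N < 1 := (div_lt_one hN).mpr hMN
    linarith
  refine ⟨hA, hB, ?_⟩
  -- continuity
  have hc : Continuous g := by
    have : g = fun r => ∑ i ∈ Finset.range n,
        ((n.choose i : ℝ)) * (-(M / N)) ^ (n - i) * r ^ (n - 1 - i) + 1 := funext hg
    rw [this]
    apply Continuous.add _ continuous_const
    apply continuous_finset_sum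
    intro i _
    exact (continuous_const.mul (continuous_pow _))
  have hsub := intermediate_value_Ioo (le_of_lt zero_lt_one) hc.continuousOn
  have h0 : (0 : ℝ) ∈ Set.Ioo (g 0) (g 1) := ⟨hA, hB⟩
  obtain ⟨r, hr, hgr⟩ := hsub h0
  exact ⟨r, hr, hgr⟩
end

section
/- For integers K ≥ 2, 1 ≤ t ≤ K-1, and 0 ≤ S ≤ t-1, the rate R(M) = (1/(t·C(K,t))) · Σ_{i=0}^{S} C(S,i)·C(K-S, t+1-i)·(t+1+⌈i/(t-i)⌉) satisfies R(M) ≥ (K-t)/t, with equality when S = 0. -/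
theorem stmt15 (K t S : ℕ) (hK : 2 ≤ K) (ht1 : 1 ≤ t) (ht2 : t ≤ K - 1) (hS : S ≤ t - 1) :
    (1 / ((t : ℝ) * K.choose t)) *
        ∑ i ∈ Finset.range (S + 1),
          (S.choose i : ℝ) * ((K - S).choose (t + 1 - i) : ℝ) *
            ((t : ℝ) + 1 + (⌈(i : ℝ) / ((t : ℝ) - i)⌉ : ℝ))
      ≥ ((K : ℝ) - t) / t ∧
    (S = 0 →
      (1 / ((t : ℝ) * K.choose t)) *
          ∑ i ∈ Finset.range (S + 1),
            (S.choose i : ℝ) * ((K - S).choose (t + 1 - i) : ℝ) *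
              ((t : ℝ) + 1 + (⌈(i : ℝ) / ((t : ℝ) - i)⌉ : ℝ))
        = ((K : ℝ) - t) / t) := by
  have htK : t ≤ K := le_trans ht2 (Nat.sub_le K 1)
  have htK' : t + 1 ≤ K := by omega
  have hSt : S < t := by omega
  have hSK : S ≤ K := by omega
  -- Vandermonde
  have hv : ∑ i ∈ Finset.range (S + 1), S.choose i * (K - S).choose (t + 1 - i)
      = K.choose (t + 1) := by
    have h1 : K.choose (t + 1)
        = ∑ i ∈ Finset.range (t + 2), S.choose i * (K - S).choose (t + 1 - i) := by
      have h := Nat.add_choose_eq S (K - S) (t + 1)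
      rw [Nat.add_sub_cancel' hSK] at h
      rw [h, Finset.Nat.sum_antidiagonal_eq_sum_range_succ_mk]
    rw [h1]
    apply Finset.sum_subset
    · intro x hx
      simp only [Finset.mem_range] at hx ⊢
      omega
    · intro x hx hx'
      simp only [Finset.mem_range] at hx hx'
      rw [Nat.choose_eq_zero_of_lt (by omega)]
      ring
  have hvR : ∑ i ∈ Finset.range (S + 1), (S.choose i : ℝ) * ((K - S).choose (t + 1 - i) : ℝ)
      = (K.choose (t + 1) : ℝ) := by
    rw [← hv]; push_cast; ring
  have hCpos : 0 < (K.choose t : ℝ) := by exact_mod_cast Nat.choose_pos htK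
  have htpos : 0 < (t : ℝ) := by exact_mod_cast ht1
  -- key identity: (t+1) * C(K,t+1) = (K-t) * C(K,t)
  have hid : ((t : ℝ) + 1) * (K.choose (t + 1) : ℝ) = ((K : ℝ) - t) * (K.choose t : ℝ) := by
    have h := Nat.choose_succ_right_eq K t
    have h' : (K.choose (t + 1) : ℝ) * ((t : ℝ) + 1) = (K.choose t : ℝ) * ((K - t : ℕ) : ℝ) := by
      exact_mod_cast congrArg (Nat.cast (R := ℝ)) h
    rw [Nat.cast_sub htK] at h'
    linarith
  -- each ceiling term is nonnegative
  have hceil : ∀ i ∈ Finset.range (S + 1), (0 : ℝ) ≤ (⌈(i : ℝ) / ((t : ℝ) - i)⌉ : ℝ) := by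
    intro i hi
    simp only [Finset.mem_range] at hi
    have hit : (i : ℝ) < t := by exact_mod_cast (by omega : i < t)
    have : (0 : ℝ) ≤ (i : ℝ) / ((t : ℝ) - i) :=
      div_nonneg (by positivity) (by linarith)
    exact_mod_cast Int.ceil_nonneg this
  -- lower bound the sum
  have hsum : ∑ i ∈ Finset.range (S + 1),
      (S.choose i : ℝ) * ((K - S).choose (t + 1 - i) : ℝ) *
        ((t : ℝ) + 1 + (⌈(i : ℝ) / ((t : ℝ) - i)⌉ : ℝ))
      ≥ ((K : ℝ) - t) * (K.choose t : ℝ) := by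
    have hle : ∑ i ∈ Finset.range (S + 1),
        (S.choose i : ℝ) * ((K - S).choose (t + 1 - i) : ℝ) * ((t : ℝ) + 1)
        ≤ ∑ i ∈ Finset.range (S + 1),
        (S.choose i : ℝ) * ((K - S).choose (t + 1 - i) : ℝ) *
          ((t : ℝ) + 1 + (⌈(i : ℝ) / ((t : ℝ) - i)⌉ : ℝ)) := by
      apply Finset.sum_le_sum
      intro i hi
      have h0 := hceil i hi
      have hc : (0 : ℝ) ≤ (S.choose i : ℝ) * ((K - S).choose (t + 1 - i) : ℝ) := by positivity
      nlinarith
    have heq : ∑ i ∈ Finset.range (S + 1),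
        (S.choose i : ℝ) * ((K - S).choose (t + 1 - i) : ℝ) * ((t : ℝ) + 1)
        = ((K : ℝ) - t) * (K.choose t : ℝ) := by
      rw [← Finset.sum_mul, hvR]
      linarith [hid]
    linarith
  constructor
  · have htC : 0 < (t : ℝ) * (K.choose t : ℝ) := by positivity
    rw [ge_iff_le, div_le_iff₀ htpos]
    have h2 : (1 / ((t : ℝ) * K.choose t)) *
        (∑ i ∈ Finset.range (S + 1),
          (S.choose i : ℝ) * ((K - S).choose (t + 1 - i) : ℝ) *
            ((t : ℝ) + 1 + (⌈(i : ℝ) / ((t : ℝ) - i)⌉ : ℝ)))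
        ≥ (1 / ((t : ℝ) * K.choose t)) * (((K : ℝ) - t) * (K.choose t : ℝ)) := by
      apply mul_le_mul_of_nonneg_left hsum (by positivity)
    have h3 : (1 / ((t : ℝ) * K.choose t)) * (((K : ℝ) - t) * (K.choose t : ℝ))
        = ((K : ℝ) - t) / t := by
      field_simp
    rw [h3] at h2
    calc ((K : ℝ) - t) = ((K : ℝ) - t) / t * t := by field_simp
    _ ≤ _ := by
        apply mul_le_mul_of_nonneg_right _ (le_of_lt htpos)
        exact h2
  · intro hS0
    subst hS0
    rw [Finset.sum_range_one]
    simp only [Nat.choose_self, Nat.cast_zero, Nat.sub_zero, Nat.cast_one, zero_div,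
      Int.ceil_zero, Int.cast_zero, add_zero, one_mul, Nat.sub_zero]
    field_simp
    linear_combination hid
end
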